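/- arXiv:2104.04997 — 6 statements merged into one kernel-verified Lean document; each statement's English description precedes it below -/
import Mathlib

section
/- Let $\mu_0,\mu_1 \ge 0$ with $\mu_0+\mu_1=1$, and let $f:\{0,1\}\to\mathbb{R}_{>0}$. Then $\mu_0 f(0)\log f(0) + \mu_1 f(1)\log f(1) \le (\mu_0 f(0)+\mu_1 f(1))\log(\mu_0 f(0)+\mu_1 f(1)) + \mu_0\mu_1 (f(1)-f(0))(\log f(1)-\log f(0))$. -/
theorem two_point_log_sobolev (μ₀ μ₁ : ℝ) (hμ₀ : 0 ≤ μ₀) (hμ₁ : 0 ≤ μ₁)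
    (hsum : μ₀ + μ₁ = 1) (f : Fin 2 → ℝ) (hf : ∀ x, 0 < f x) :
    μ₀ * f 0 * Real.log (f 0) + μ₁ * f 1 * Real.log (f 1) ≤
      (μ₀ * f 0 + μ₁ * f 1) * Real.log (μ₀ * f 0 + μ₁ * f 1) +
        μ₀ * μ₁ * (f 1 - f 0) * (Real.log (f 1) - Real.log (f 0)) := by
  have ha : 0 < f 0 := hf 0
  have hb : 0 < f 1 := hf 1
  have hm : 0 < μ₀ * f 0 + μ₁ * f 1 := by
    rcases le_total (f 0) (f 1) with h | h
    · nlinarith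
    · nlinarith
  have hconc : μ₀ * Real.log (f 0) + μ₁ * Real.log (f 1) ≤
      Real.log (μ₀ * f 0 + μ₁ * f 1) := by
    have := strictConcaveOn_log_Ioi.concaveOn.2 (Set.mem_Ioi.2 ha) (Set.mem_Ioi.2 hb)
      hμ₀ hμ₁ hsum
    simpa [smul_eq_mul] using this
  have hprod := mul_le_mul_of_nonneg_left hconc hm.le
  have key : μ₀ * f 0 * Real.log (f 0) + μ₁ * f 1 * Real.log (f 1) =
      (μ₀ * f 0 + μ₁ * f 1) * (μ₀ * Real.log (f 0) + μ₁ * Real.log (f 1)) +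
        μ₀ * μ₁ * (f 1 - f 0) * (Real.log (f 1) - Real.log (f 0)) := by
    have h1 : μ₁ = 1 - μ₀ := by linarith
    subst h1; ring
  linarith
end

section
/- For every $N \ge 1$, every $\alpha$ with $0 < \alpha \le N$, and every $f:\{0,\ldots,N\}\to\mathbb{R}_{>0}$, letting $\pi_{\alpha,N}(n) = \binom{N}{n}(\alpha/N)^n(1-\alpha/N)^{N-n}$ be the binomial distribution, one has $\sum_{n=0}^N f(n)\log f(n)\,\pi_{\alpha,N}(n) \le \big(\sum_{n=0}^N f(n)\pi_{\alpha,N}(n)\big)\log\big(\sum_{n=0}^N f(n)\pi_{\alpha,N}(n)\big) + \sum_{n=1}^N n\,(f(n)-f(n-1))(\log f(n)-\log f(n-1))\,\pi_{\alpha,N}(n)$. -/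
open Finset

noncomputable def Bw (p : ℝ) (N n : ℕ) : ℝ := (N.choose n : ℝ) * p ^ n * (1 - p) ^ (N - n)

lemma Bw_nonneg {p : ℝ} (hp0 : 0 ≤ p) (hp1 : p ≤ 1) (N n : ℕ) : 0 ≤ Bw p N n := by
  unfold Bw
  have h1 : (0:ℝ) ≤ 1 - p := by linarith
  positivity

lemma comb_pos {p x y : ℝ} (hp0 : 0 ≤ p) (hp1 : p ≤ 1) (hx : 0 < x) (hy : 0 < y) :
    0 < (1 - p) * x + p * y := by
  rcases lt_or_eq_of_le hp1 with h | h
  · have := mul_pos (show (0:ℝ) < 1 - p by linarith) hx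
    have := mul_nonneg hp0 hy.le
    linarith
  · rw [h]; simpa using hy

lemma psi_nonneg {a b : ℝ} (ha : 0 < a) (hb : 0 < b) :
    0 ≤ (a - b) * (Real.log a - Real.log b) := by
  rcases le_total a b with h | h
  · have : Real.log a ≤ Real.log b := Real.log_le_log ha h
    nlinarith
  · have : Real.log b ≤ Real.log a := Real.log_le_log hb h
    nlinarith

lemma h_convex : ConvexOn ℝ (Set.Ioi (0:ℝ)) (fun u : ℝ => (u - 1) * Real.log u) := by
  have h1 : ConvexOn ℝ (Set.Ioi (0:ℝ)) (fun u : ℝ => u * Real.log u) :=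
    Real.convexOn_mul_log.subset (Set.Ioi_subset_Ici le_rfl) (convex_Ioi 0)
  have h2 : ConvexOn ℝ (Set.Ioi (0:ℝ)) (fun u : ℝ => -Real.log u) :=
    strictConcaveOn_log_Ioi.concaveOn.neg
  have h3 := h1.add h2
  have he : (fun u : ℝ => (u - 1) * Real.log u)
      = (fun u : ℝ => u * Real.log u) + fun u : ℝ => -Real.log u := by
    funext u; simp [Pi.add_apply]; ring
  rw [he]; exact h3

lemma two_point {p a b : ℝ} (hp0 : 0 ≤ p) (hp1 : p ≤ 1) (ha : 0 < a) (hb : 0 < b) :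
    (1 - p) * (b * Real.log b) + p * (a * Real.log a) ≤
      ((1 - p) * b + p * a) * Real.log ((1 - p) * b + p * a) +
        p * (1 - p) * (a - b) * (Real.log a - Real.log b) := by
  have hmpos : 0 < (1 - p) * b + p * a := comb_pos hp0 hp1 hb ha
  have hconc : (1 - p) * Real.log b + p * Real.log a ≤ Real.log ((1 - p) * b + p * a) := by
    have := strictConcaveOn_log_Ioi.concaveOn.2 (Set.mem_Ioi.2 hb) (Set.mem_Ioi.2 ha)
      (by linarith : (0:ℝ) ≤ 1 - p) hp0 (by ring)
    simpa [smul_eq_mul] using this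
  set L := Real.log ((1 - p) * b + p * a) with hL
  have k1 : (1 - p) * b * (Real.log b - L) ≤ (1 - p) * b * (p * (Real.log b - Real.log a)) := by
    apply mul_le_mul_of_nonneg_left _ (by nlinarith : (0:ℝ) ≤ (1 - p) * b)
    linarith
  have k2 : p * a * (Real.log a - L) ≤ p * a * ((1 - p) * (Real.log a - Real.log b)) := by
    apply mul_le_mul_of_nonneg_left _ (by nlinarith : (0:ℝ) ≤ p * a)
    linarith
  calc (1 - p) * (b * Real.log b) + p * (a * Real.log a)
      = ((1 - p) * b + p * a) * L
        + ((1 - p) * b * (Real.log b - L) + p * a * (Real.log a - L)) := by ring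
    _ ≤ ((1 - p) * b + p * a) * L
        + ((1 - p) * b * (p * (Real.log b - Real.log a))
          + p * a * ((1 - p) * (Real.log a - Real.log b))) := by
        exact add_le_add_right (add_le_add k1 k2) _
    _ = ((1 - p) * b + p * a) * L + p * (1 - p) * (a - b) * (Real.log a - Real.log b) := by ring

lemma psi_convex {p a b c d : ℝ} (hp0 : 0 ≤ p) (hp1 : p ≤ 1)
    (ha : 0 < a) (hb : 0 < b) (hc : 0 < c) (hd : 0 < d) :
    ((1 - p) * b + p * a - ((1 - p) * d + p * c)) *
        (Real.log ((1 - p) * b + p * a) - Real.log ((1 - p) * d + p * c)) ≤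
      (1 - p) * ((b - d) * (Real.log b - Real.log d)) +
        p * ((a - c) * (Real.log a - Real.log c)) := by
  have hXpos : 0 < (1 - p) * b + p * a := comb_pos hp0 hp1 hb ha
  have hYpos : 0 < (1 - p) * d + p * c := comb_pos hp0 hp1 hd hc
  set X := (1 - p) * b + p * a with hX
  set Y := (1 - p) * d + p * c with hY
  have hw1 : (0:ℝ) ≤ (1 - p) * d / Y := div_nonneg (mul_nonneg (by linarith) hd.le) hYpos.le
  have hw2 : (0:ℝ) ≤ p * c / Y := div_nonneg (mul_nonneg hp0 hc.le) hYpos.le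
  have hwsum : (1 - p) * d / Y + p * c / Y = 1 := by
    rw [← add_div, div_eq_one_iff_eq hYpos.ne']
  have hcomb : ((1 - p) * d / Y) • (b / d) + (p * c / Y) • (a / c) = X / Y := by
    simp only [smul_eq_mul]
    rw [hX]
    field_simp
  have key := h_convex.2 (Set.mem_Ioi.2 (div_pos hb hd)) (Set.mem_Ioi.2 (div_pos ha hc))
    hw1 hw2 hwsum
  rw [hcomb] at key
  simp only [smul_eq_mul] at key
  have key2 := mul_le_mul_of_nonneg_left key hYpos.le
  have e1 : Y * ((X / Y - 1) * Real.log (X / Y)) = (X - Y) * (Real.log X - Real.log Y) := by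
    rw [Real.log_div hXpos.ne' hYpos.ne']
    field_simp
  have e2 : Y * ((1 - p) * d / Y * ((b / d - 1) * Real.log (b / d)) +
      p * c / Y * ((a / c - 1) * Real.log (a / c))) =
      (1 - p) * ((b - d) * (Real.log b - Real.log d)) +
        p * ((a - c) * (Real.log a - Real.log c)) := by
    rw [Real.log_div hb.ne' hd.ne', Real.log_div ha.ne' hc.ne']
    field_simp
  rw [e1, e2] at key2
  exact key2

lemma Bw_succ (p : ℝ) (N n : ℕ) (hn : n ≤ N) :
    Bw p (N+1) (n+1) = p * Bw p N n + (1 - p) * Bw p N (n+1) := by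
  unfold Bw
  rw [Nat.choose_succ_succ (N) (n), Nat.succ_sub_succ]
  rcases lt_or_eq_of_le hn with h | h
  · have e : N - n = (N - (n+1)) + 1 := by omega
    push_cast
    rw [e, pow_succ, pow_succ]
    ring
  · subst h
    rw [Nat.choose_eq_zero_of_lt (Nat.lt_succ_self n), Nat.choose_self]
    push_cast
    simp [Nat.sub_self]
    ring

lemma Bw_zero (p : ℝ) (N : ℕ) : Bw p (N+1) 0 = (1 - p) * Bw p N 0 := by
  unfold Bw
  simp [pow_succ]
  ring

lemma Bw_top (p : ℝ) (N : ℕ) : Bw p N (N+1) = 0 := by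
  unfold Bw
  rw [Nat.choose_eq_zero_of_lt (by omega)]
  simp

lemma sum_conv (p : ℝ) (N : ℕ) (h : ℕ → ℝ) :
    ∑ n ∈ range (N+2), h n * Bw p (N+1) n
      = ∑ s ∈ range (N+1), ((1-p) * h s + p * h (s+1)) * Bw p N s := by
  rw [Finset.sum_range_succ' (fun n => h n * Bw p (N+1) n) (N+1)]
  have e1 : ∑ i ∈ range (N+1), h (i+1) * Bw p (N+1) (i+1)
      = ∑ i ∈ range (N+1), (p * (h (i+1) * Bw p N i) + (1-p) * (h (i+1) * Bw p N (i+1))) := by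
    refine Finset.sum_congr rfl (fun i hi => ?_)
    rw [Bw_succ p N i (Nat.lt_succ_iff.1 (Finset.mem_range.1 hi))]
    ring
  rw [e1, Finset.sum_add_distrib]
  have e2 : ∑ i ∈ range (N+1), (1-p) * (h (i+1) * Bw p N (i+1))
      = ∑ i ∈ range N, (1-p) * (h (i+1) * Bw p N (i+1)) := by
    rw [Finset.sum_range_succ, Bw_top]
    simp
  rw [e2, Bw_zero]
  have e3 : ∑ s ∈ range (N+1), ((1-p) * h s + p * h (s+1)) * Bw p N s
      = ∑ s ∈ range (N+1), ((1-p) * (h s * Bw p N s) + p * (h (s+1) * Bw p N s)) :=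
    Finset.sum_congr rfl (fun s _ => by ring)
  rw [e3, Finset.sum_add_distrib]
  rw [Finset.sum_range_succ' (fun s => (1-p) * (h s * Bw p N s)) N]
  ring

lemma Bw_mul_succ (p : ℝ) (N i : ℕ) :
    ((i:ℝ)+1) * Bw p (N+1) (i+1) = ((N:ℝ)+1) * p * Bw p N i := by
  unfold Bw
  have h0 := Nat.add_one_mul_choose_eq N i
  have hch : ((N:ℝ)+1) * (N.choose i : ℝ) = ((N+1).choose (i+1) : ℝ) * ((i:ℝ)+1) := by
    exact_mod_cast congrArg (Nat.cast (R := ℝ)) h0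
  rw [Nat.succ_sub_succ, pow_succ]
  linear_combination (p ^ i * p * (1-p) ^ (N - i)) * hch.symm

lemma Bw_shift (p : ℝ) (N i : ℕ) (hi : i < N) :
    ((i:ℝ)+1) * (1-p) * Bw p N (i+1) = p * ((N:ℝ) - (i:ℝ)) * Bw p N i := by
  unfold Bw
  have h0 := Nat.choose_succ_right_eq N i
  have hch : ((N.choose (i+1)):ℝ) * ((i:ℝ)+1) = (N.choose i : ℝ) * ((N:ℝ) - (i:ℝ)) := by
    have := congrArg (Nat.cast (R := ℝ)) h0
    push_cast [Nat.cast_sub hi.le] at this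
    exact_mod_cast this
  have hsub : N - i = (N - (i+1)) + 1 := by omega
  rw [hsub, pow_succ, pow_succ]
  linear_combination ((1-p) * (p ^ i * p * (1-p) ^ (N - (i+1)))) * hch

lemma mlsi (p : ℝ) (hp0 : 0 ≤ p) (hp1 : p ≤ 1) :
    ∀ N : ℕ, ∀ f : ℕ → ℝ, (∀ n ≤ N, 0 < f n) →
    ∑ n ∈ range (N+1), f n * Real.log (f n) * Bw p N n ≤
      (∑ n ∈ range (N+1), f n * Bw p N n) *
          Real.log (∑ n ∈ range (N+1), f n * Bw p N n) +
      ∑ n ∈ Icc 1 N, (n:ℝ) * (f n - f (n-1)) * (Real.log (f n) - Real.log (f (n-1))) *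
        Bw p N n := by
  intro N
  induction N with
  | zero =>
    intro f hf
    simp [Bw]
  | succ N ih =>
    intro f hf
    set g : ℕ → ℝ := fun s => (1-p) * f s + p * f (s+1) with hg
    have hgpos : ∀ n ≤ N, 0 < g n := fun n hn =>
      comb_pos hp0 hp1 (hf n (by omega)) (hf (n+1) (by omega))
    set D : ℕ → ℝ := fun m => (f (m+1) - f m) * (Real.log (f (m+1)) - Real.log (f m)) with hD
    have hDpos : ∀ m, m ≤ N → 0 ≤ D m * Bw p N m := fun m hm =>
      mul_nonneg (psi_nonneg (hf (m+1) (by omega)) (hf m (by omega))) (Bw_nonneg hp0 hp1 N m)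
    -- Step 1 : conditioning + two-point inequality
    have step1 : ∑ n ∈ range (N+1+1), f n * Real.log (f n) * Bw p (N+1) n
        ≤ ∑ s ∈ range (N+1), g s * Real.log (g s) * Bw p N s
          + ∑ s ∈ range (N+1), p * (1-p) * (D s * Bw p N s) := by
      rw [← Finset.sum_add_distrib]
      calc ∑ n ∈ range (N+1+1), f n * Real.log (f n) * Bw p (N+1) n
          = ∑ s ∈ range (N+1),
              ((1-p) * (f s * Real.log (f s)) + p * (f (s+1) * Real.log (f (s+1))))
                * Bw p N s := sum_conv p N (fun n => f n * Real.log (f n))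
        _ ≤ ∑ s ∈ range (N+1),
              (g s * Real.log (g s) * Bw p N s + p * (1-p) * (D s * Bw p N s)) := by
            apply Finset.sum_le_sum
            intro s hs
            have hs' : s ≤ N := Nat.lt_succ_iff.1 (Finset.mem_range.1 hs)
            have h2p := two_point hp0 hp1 (hf (s+1) (by omega)) (hf s (by omega))
            have hB := Bw_nonneg hp0 hp1 N s
            simp only [hg, hD]
            nlinarith [mul_le_mul_of_nonneg_right h2p hB]
    -- the mean identity
    have hE : ∑ n ∈ range (N+1+1), f n * Bw p (N+1) n
        = ∑ s ∈ range (N+1), g s * Bw p N s := by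
      rw [sum_conv p N f]
    -- apply inductive hypothesis to g
    have hIH := ih g hgpos
    -- bound the g-Dirichlet form via convexity
    have hG : ∑ s ∈ Icc 1 N, (s:ℝ) * (g s - g (s-1)) * (Real.log (g s) - Real.log (g (s-1)))
          * Bw p N s
        ≤ ∑ i ∈ range N, (((i:ℝ)+1) * ((1-p) * (D i * Bw p N (i+1)))
            + ((i:ℝ)+1) * (p * (D (i+1) * Bw p N (i+1)))) := by
      rw [← Finset.Ico_add_one_right_eq_Icc, Finset.sum_Ico_eq_sum_range]
      apply Finset.sum_le_sum
      intro i hi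
      have hi' : i < N := Finset.mem_range.1 hi
      have hpsi := psi_convex hp0 hp1 (hf (i+2) (by omega)) (hf (i+1) (by omega))
        (hf (i+1) (by omega)) (hf i (by omega))
      have hB := Bw_nonneg hp0 hp1 N (i+1)
      have hco : (0:ℝ) ≤ (i:ℝ) + 1 := by positivity
      have key := mul_le_mul_of_nonneg_right (mul_le_mul_of_nonneg_left hpsi hco) hB
      have h1 : (1:ℕ) + i - 1 = i := by omega
      have h2 : (1:ℕ) + i = i + 1 := by omega
      rw [h1, h2]
      simp only [hg, hD]
      push_cast
      nlinarith [key]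
    -- the target Dirichlet form identity
    have hC : ∑ n ∈ Icc 1 (N+1), (n:ℝ) * (f n - f (n-1))
          * (Real.log (f n) - Real.log (f (n-1))) * Bw p (N+1) n
        = ∑ m ∈ range (N+1), ((N:ℝ)+1) * p * (D m * Bw p N m) := by
      rw [← Finset.Ico_add_one_right_eq_Icc, Finset.sum_Ico_eq_sum_range]
      refine Finset.sum_congr rfl (fun i hi => ?_)
      have h1 : (1:ℕ) + i - 1 = i := by omega
      have h2 : (1:ℕ) + i = i + 1 := by omega
      rw [h1, h2]
      simp only [hD]
      push_cast
      linear_combination ((f (i+1) - f i) * (Real.log (f (i+1)) - Real.log (f i)))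
        * Bw_mul_succ p N i
    -- rewrite the two pieces of the convexity bound
    have hS2 : ∑ i ∈ range N, ((i:ℝ)+1) * ((1-p) * (D i * Bw p N (i+1)))
        = ∑ i ∈ range N, p * ((N:ℝ) - (i:ℝ)) * (D i * Bw p N i) := by
      refine Finset.sum_congr rfl (fun i hi => ?_)
      have := Bw_shift p N i (Finset.mem_range.1 hi)
      linear_combination (D i) * this
    have hS2' : ∑ i ∈ range N, p * ((N:ℝ) - (i:ℝ)) * (D i * Bw p N i)
        = ∑ m ∈ range (N+1), p * ((N:ℝ) - (m:ℝ)) * (D m * Bw p N m) := by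
      rw [Finset.sum_range_succ]
      simp
    have hS3 : ∑ i ∈ range N, ((i:ℝ)+1) * (p * (D (i+1) * Bw p N (i+1)))
        = ∑ m ∈ range (N+1), (m:ℝ) * (p * (D m * Bw p N m)) := by
      rw [Finset.sum_range_succ' (fun m => (m:ℝ) * (p * (D m * Bw p N m))) N]
      push_cast
      simp
    -- final coefficient comparison
    have hfinal : ∑ s ∈ range (N+1), p * (1-p) * (D s * Bw p N s)
          + ∑ m ∈ range (N+1), p * ((N:ℝ) - (m:ℝ)) * (D m * Bw p N m)
          + ∑ m ∈ range (N+1), (m:ℝ) * (p * (D m * Bw p N m))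
        ≤ ∑ m ∈ range (N+1), ((N:ℝ)+1) * p * (D m * Bw p N m) := by
      rw [← Finset.sum_add_distrib, ← Finset.sum_add_distrib]
      apply Finset.sum_le_sum
      intro m hm
      have hm' : m ≤ N := Nat.lt_succ_iff.1 (Finset.mem_range.1 hm)
      have hDm := hDpos m hm'
      nlinarith [mul_nonneg (mul_nonneg hp0 hp0) hDm]
    -- assemble
    rw [hE] at *
    calc ∑ n ∈ range (N+1+1), f n * Real.log (f n) * Bw p (N+1) n
        ≤ ∑ s ∈ range (N+1), g s * Real.log (g s) * Bw p N s
            + ∑ s ∈ range (N+1), p * (1-p) * (D s * Bw p N s) := step1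
      _ ≤ ((∑ s ∈ range (N+1), g s * Bw p N s) *
            Real.log (∑ s ∈ range (N+1), g s * Bw p N s)
          + ∑ s ∈ Icc 1 N, (s:ℝ) * (g s - g (s-1))
              * (Real.log (g s) - Real.log (g (s-1))) * Bw p N s)
          + ∑ s ∈ range (N+1), p * (1-p) * (D s * Bw p N s) := by
            exact add_le_add_left hIH _
      _ ≤ (∑ s ∈ range (N+1), g s * Bw p N s) *
            Real.log (∑ s ∈ range (N+1), g s * Bw p N s)
          + ∑ n ∈ Icc 1 (N+1), (n:ℝ) * (f n - f (n-1))
              * (Real.log (f n) - Real.log (f (n-1))) * Bw p (N+1) n := by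
            rw [hC]
            have h5 := hG
            rw [Finset.sum_add_distrib, hS2, hS2', hS3] at h5
            linarith [hfinal, h5]


theorem binomial_modified_log_sobolev (N : ℕ) (hN : 1 ≤ N) (α : ℝ)
    (hα : 0 < α) (hαN : α ≤ N) (f : ℕ → ℝ) (hf : ∀ n ≤ N, 0 < f n)
    (π : ℕ → ℝ)
    (hπ : ∀ n, π n = (N.choose n : ℝ) * (α / N) ^ n * (1 - α / N) ^ (N - n)) :
    ∑ n ∈ Finset.range (N + 1), f n * Real.log (f n) * π n ≤
      (∑ n ∈ Finset.range (N + 1), f n * π n) *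
          Real.log (∑ n ∈ Finset.range (N + 1), f n * π n) +
        ∑ n ∈ Finset.Icc 1 N,
          (n : ℝ) * (f n - f (n - 1)) * (Real.log (f n) - Real.log (f (n - 1))) * π n := by
  have hNpos : (0:ℝ) < N := by exact_mod_cast hN
  have hp0 : 0 ≤ α / N := div_nonneg hα.le (Nat.cast_nonneg N)
  have hp1 : α / N ≤ 1 := by rw [div_le_one hNpos]; exact hαN
  have h := mlsi (α / N) hp0 hp1 N f hf
  simp only [hπ]
  simpa only [Bw] using h
end

section
/- The function $\Phi(x,y) = (x-y)(\log x - \log y)$ is jointly convex on $(0,\infty)\times(0,\infty)$. -/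
open Real Set

lemma aux_perspective :
    ConvexOn ℝ (Set.Ioi (0 : ℝ) ×ˢ Set.Ioi (0 : ℝ))
      (fun p : ℝ × ℝ => p.1 * (Real.log p.1 - Real.log p.2)) := by
  refine ⟨(convex_Ioi 0).prod (convex_Ioi 0), ?_⟩
  rintro ⟨x1, y1⟩ ⟨hx1, hy1⟩ ⟨x2, y2⟩ ⟨hx2, hy2⟩ a b ha hb hab
  simp only [Set.mem_Ioi] at hx1 hy1 hx2 hy2
  simp only [Prod.smul_mk, Prod.mk_add_mk, smul_eq_mul]
  -- nondegenerate: a = 0 or b = 0 cases are fine too since weights are then 0/1,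
  -- but general computation works as long as y := a*y1+b*y2 > 0 and x > 0.
  set x := a * x1 + b * x2 with hxdef
  set y := a * y1 + b * y2 with hydef
  have hx : 0 < x := by
    rcases eq_or_lt_of_le ha with h | h
    · simp [hxdef, ← h, show b = 1 by linarith, hx2]
    · have : 0 ≤ b * x2 := mul_nonneg hb hx2.le
      nlinarith
  have hy : 0 < y := by
    rcases eq_or_lt_of_le ha with h | h
    · simp [hydef, ← h, show b = 1 by linarith, hy2]
    · have : 0 ≤ b * y2 := mul_nonneg hb hy2.le
      nlinarith
  have hu1 : (0:ℝ) ≤ x1 / y1 := (div_pos hx1 hy1).le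
  have hu2 : (0:ℝ) ≤ x2 / y2 := (div_pos hx2 hy2).le
  have hw1 : (0:ℝ) ≤ a * y1 / y := div_nonneg (mul_nonneg ha hy1.le) hy.le
  have hw2 : (0:ℝ) ≤ b * y2 / y := div_nonneg (mul_nonneg hb hy2.le) hy.le
  have hwsum : a * y1 / y + b * y2 / y = 1 := by
    field_simp [hydef]
    exact hydef.symm
  have key := Real.convexOn_mul_log.2 (Set.mem_Ici.mpr hu1) (Set.mem_Ici.mpr hu2)
    hw1 hw2 hwsum
  simp only [smul_eq_mul] at key
  have hcomb : a * y1 / y * (x1 / y1) + b * y2 / y * (x2 / y2) = x / y := by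
    field_simp [hxdef]
    ring
  rw [hcomb] at key
  -- multiply key by y
  have key2 : y * (x / y * Real.log (x / y)) ≤
      a * y1 * (x1 / y1 * Real.log (x1 / y1)) + b * y2 * (x2 / y2 * Real.log (x2 / y2)) := by
    have := mul_le_mul_of_nonneg_left key hy.le
    calc y * (x / y * Real.log (x / y))
        ≤ y * (a * y1 / y * (x1 / y1 * Real.log (x1 / y1)) +
            b * y2 / y * (x2 / y2 * Real.log (x2 / y2))) := this
      _ = a * y1 * (x1 / y1 * Real.log (x1 / y1)) +
            b * y2 * (x2 / y2 * Real.log (x2 / y2)) := by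
          field_simp
  have e0 : y * (x / y * Real.log (x / y)) = x * (Real.log x - Real.log y) := by
    rw [Real.log_div hx.ne' hy.ne']
    field_simp
  have e1 : a * y1 * (x1 / y1 * Real.log (x1 / y1)) = a * (x1 * (Real.log x1 - Real.log y1)) := by
    rw [Real.log_div hx1.ne' hy1.ne']
    field_simp
  have e2 : b * y2 * (x2 / y2 * Real.log (x2 / y2)) = b * (x2 * (Real.log x2 - Real.log y2)) := by
    rw [Real.log_div hx2.ne' hy2.ne']
    field_simp
  rw [e0, e1, e2] at key2
  exact key2

lemma aux_perspective_swap :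
    ConvexOn ℝ (Set.Ioi (0 : ℝ) ×ˢ Set.Ioi (0 : ℝ))
      (fun p : ℝ × ℝ => p.2 * (Real.log p.2 - Real.log p.1)) := by
  have h := aux_perspective.comp_affineMap
    ((LinearEquiv.prodComm ℝ ℝ ℝ).toLinearMap.toAffineMap)
  have hs : ((LinearEquiv.prodComm ℝ ℝ ℝ).toLinearMap.toAffineMap) ⁻¹'
      (Set.Ioi (0 : ℝ) ×ˢ Set.Ioi (0 : ℝ)) = Set.Ioi (0 : ℝ) ×ˢ Set.Ioi (0 : ℝ) := by
    ext ⟨u, v⟩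
    simp [LinearEquiv.prodComm, And.comm]
    exact And.comm
  rw [hs] at h
  exact h

theorem jointly_convex_log_diff :
    ConvexOn ℝ (Set.Ioi (0 : ℝ) ×ˢ Set.Ioi (0 : ℝ))
      (fun p : ℝ × ℝ => (p.1 - p.2) * (Real.log p.1 - Real.log p.2)) := by
  have h := aux_perspective.add aux_perspective_swap
  convert h using 2 with p
  case e'_12 => simp only [Pi.add_apply]; ring
  case e'_10 => rfl
end

section
/- Let $\tau_n = \frac{1}{4^n}\binom{2n}{n}$ and $\sigma_{n,k}^2 = \tau_n\tau_k\tau_{n-k}$. Then for every $n \ge 2$, $A_{2n} := (1 - 2\tau_n)^2 + 2\sum_{k=1}^{\lfloor n/2 \rfloor} \sigma_{n,k}^2 \le 2$. -/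
open Finset

section Aux

variable (τ : ℕ → ℝ) (hτ : ∀ m, τ m = (1 / 4 ^ m) * ((2 * m).choose m : ℝ))

include hτ

lemma tau_pos : ∀ m, 0 < τ m := by
  intro m
  rw [hτ]
  have h1 : (0:ℝ) < ((2 * m).choose m : ℝ) := by
    exact_mod_cast Nat.choose_pos (by omega)
  positivity

lemma tau_rec : ∀ k : ℕ, (2 * (k:ℝ) + 2) * τ (k + 1) = (2 * k + 1) * τ k := by
  intro k
  have h := Nat.succ_mul_centralBinom_succ k
  have h' : ((k:ℝ) + 1) * ((2 * (k+1)).choose (k+1) : ℝ)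
      = 2 * (2 * k + 1) * ((2 * k).choose k : ℝ) := by
    have := congrArg (Nat.cast (R := ℝ)) h
    push_cast [Nat.centralBinom] at this ⊢
    convert this using 2 <;> ring_nf
  rw [hτ, hτ]
  have h4 : (4:ℝ) ^ (k+1) = 4 * 4 ^ k := by ring
  field_simp
  linear_combination (2 * (4:ℝ) ^ k) * h'

/-- symmetry trick : `∑ 2k τ_k τ_{m-k} = m ∑ τ_k τ_{m-k}` -/
lemma tau_sym (m : ℕ) :
    ∑ k ∈ range (m + 1), (2 * (k:ℝ)) * (τ k * τ (m - k))
      = (m:ℝ) * ∑ k ∈ range (m + 1), τ k * τ (m - k) := by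
  have hrefl : ∑ k ∈ range (m + 1), (2 * (k:ℝ)) * (τ k * τ (m - k))
      = ∑ k ∈ range (m + 1), (2 * ((m - k : ℕ):ℝ)) * (τ (m - k) * τ (m - (m - k))) :=
    (Finset.sum_range_reflect (fun k => (2 * ((k:ℕ):ℝ)) * (τ k * τ (m - k))) (m+1)).symm
  have key : (∑ k ∈ range (m + 1), (2 * (k:ℝ)) * (τ k * τ (m - k)))
      + (∑ k ∈ range (m + 1), (2 * (k:ℝ)) * (τ k * τ (m - k)))
      = 2 * ((m:ℝ) * ∑ k ∈ range (m + 1), τ k * τ (m - k)) := by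
    nth_rewrite 2 [hrefl]
    rw [← Finset.sum_add_distrib, Finset.mul_sum, Finset.mul_sum]
    apply Finset.sum_congr rfl
    intro k hk
    have hk' : k ≤ m := by simpa [Nat.lt_succ_iff] using hk
    have h1 : m - (m - k) = k := by omega
    have h2 : ((m - k : ℕ):ℝ) = (m:ℝ) - k := by
      rw [Nat.cast_sub hk']
    rw [h1, h2]
    ring
  linarith

lemma tau_conv : ∀ n : ℕ, ∑ k ∈ range (n + 1), τ k * τ (n - k) = 1 := by
  intro n
  induction n with
  | zero => simp [hτ]
  | succ n ih =>
    have hstep : ((n:ℝ) + 1) * ∑ k ∈ range (n + 2), τ k * τ (n + 1 - k)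
        = ((n:ℝ) + 1) * ∑ k ∈ range (n + 1), τ k * τ (n - k) := by
      have hA : ∑ k ∈ range (n + 2), (2 * (k:ℝ)) * (τ k * τ (n + 1 - k))
          = ((n:ℝ) + 1) * ∑ k ∈ range (n + 2), τ k * τ (n + 1 - k) := by
        have := tau_sym τ hτ (n + 1)
        push_cast at this ⊢
        linarith [this]
      have hB : ∑ k ∈ range (n + 1), (2 * (k:ℝ)) * (τ k * τ (n - k))
          = (n:ℝ) * ∑ k ∈ range (n + 1), τ k * τ (n - k) := tau_sym τ hτ n
      -- shift index in A
      have hshift : ∑ k ∈ range (n + 2), (2 * (k:ℝ)) * (τ k * τ (n + 1 - k))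
          = ∑ j ∈ range (n + 1), (2 * ((j:ℝ) + 1)) * (τ (j + 1) * τ (n - j)) := by
        rw [Finset.sum_range_succ']
        simp only [Nat.cast_zero]
        have : ∀ j ∈ range (n+1), (2 * ((j+1 : ℕ):ℝ)) * (τ (j+1) * τ (n + 1 - (j+1)))
            = (2 * ((j:ℝ) + 1)) * (τ (j + 1) * τ (n - j)) := by
          intro j hj
          have : n + 1 - (j + 1) = n - j := by omega
          rw [this]; push_cast; ring
        rw [Finset.sum_congr rfl this]
        ring
      have hrec : ∑ j ∈ range (n + 1), (2 * ((j:ℝ) + 1)) * (τ (j + 1) * τ (n - j))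
          = ∑ j ∈ range (n + 1), (2 * (j:ℝ) + 1) * (τ j * τ (n - j)) := by
        apply Finset.sum_congr rfl
        intro j _
        have h := tau_rec τ hτ j
        have : (2 * ((j:ℝ) + 1)) * (τ (j + 1) * τ (n - j))
            = ((2 * (j:ℝ) + 2) * τ (j + 1)) * τ (n - j) := by ring
        rw [this, h]; ring
      have hsplit : ∑ j ∈ range (n + 1), (2 * (j:ℝ) + 1) * (τ j * τ (n - j))
          = (∑ j ∈ range (n + 1), (2 * (j:ℝ)) * (τ j * τ (n - j)))
            + ∑ j ∈ range (n + 1), τ j * τ (n - j) := by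
        rw [← Finset.sum_add_distrib]
        apply Finset.sum_congr rfl
        intro j _; ring
      rw [← hA, hshift, hrec, hsplit, hB, ih]
      push_cast
      ring
    have hpos : ((n:ℝ) + 1) ≠ 0 := by positivity
    have := mul_left_cancel₀ hpos hstep
    rw [this, ih]

lemma tau_le_half : ∀ n : ℕ, 1 ≤ n → τ n ≤ 1 / 2 := by
  intro n hn
  have hconv := tau_conv τ hτ n
  have h0 : τ 0 = 1 := by simp [hτ]
  -- terms k = 0 and k = n contribute τ n each
  have hsub : {0, n} ⊆ range (n + 1) := by
    intro x hx
    simp only [Finset.mem_insert, Finset.mem_singleton] at hx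
    rcases hx with h | h <;> simp [h, Nat.lt_succ_iff]
  have hnonneg : ∀ k ∈ range (n + 1), k ∉ ({0, n} : Finset ℕ) → 0 ≤ τ k * τ (n - k) := by
    intro k _ _
    exact le_of_lt (mul_pos (tau_pos τ hτ k) (tau_pos τ hτ (n - k)))
  have hle : ∑ k ∈ ({0, n} : Finset ℕ), τ k * τ (n - k)
      ≤ ∑ k ∈ range (n + 1), τ k * τ (n - k) :=
    Finset.sum_le_sum_of_subset_of_nonneg hsub hnonneg
  have hne : (0:ℕ) ≠ n := by omega
  rw [Finset.sum_pair hne] at hle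
  rw [hconv] at hle
  simp only [Nat.sub_zero, Nat.sub_self, h0] at hle
  linarith

end Aux

theorem A_two_n_le_two (τ : ℕ → ℝ)
    (hτ : ∀ m, τ m = (1 / 4 ^ m) * ((2 * m).choose m : ℝ))
    (σsq : ℕ → ℕ → ℝ) (hσ : ∀ n k, σsq n k = τ n * τ k * τ (n - k)) :
    ∀ n : ℕ, 2 ≤ n →
      (1 - 2 * τ n) ^ 2 + 2 * ∑ k ∈ Finset.Icc 1 (n / 2), σsq n k ≤ 2 := by
  intro n hn
  have hpos := tau_pos τ hτ
  have hhalf := tau_le_half τ hτ n (by omega)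
  have hconv := tau_conv τ hτ n
  -- bound the sum
  have hsum : ∑ k ∈ Finset.Icc 1 (n / 2), σsq n k ≤ τ n := by
    have h1 : ∑ k ∈ Finset.Icc 1 (n / 2), σsq n k
        = τ n * ∑ k ∈ Finset.Icc 1 (n / 2), τ k * τ (n - k) := by
      rw [Finset.mul_sum]
      apply Finset.sum_congr rfl
      intro k _
      rw [hσ]; ring
    have hsub : Finset.Icc 1 (n / 2) ⊆ range (n + 1) := by
      intro x hx
      simp only [Finset.mem_Icc] at hx
      simp only [Finset.mem_range]
      omega
    have h2 : ∑ k ∈ Finset.Icc 1 (n / 2), τ k * τ (n - k)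
        ≤ ∑ k ∈ range (n + 1), τ k * τ (n - k) := by
      apply Finset.sum_le_sum_of_subset_of_nonneg hsub
      intro k _ _
      exact le_of_lt (mul_pos (hpos k) (hpos (n - k)))
    rw [h1, hconv] at *
    calc τ n * ∑ k ∈ Finset.Icc 1 (n / 2), τ k * τ (n - k)
        ≤ τ n * 1 := by
          apply mul_le_mul_of_nonneg_left _ (le_of_lt (hpos n))
          rw [← hconv]; exact h2
      _ = τ n := mul_one _
  have hsq : (1 - 2 * τ n) ^ 2 ≤ 1 := by
    nlinarith [hpos n, hhalf]
  nlinarith [hsum, hhalf]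
end

section
/- For any $\alpha > 0$ there exists $N_0$ such that for all $N \ge N_0$ and all integers $n$ with $\alpha < n \le N$, the binomial probability satisfies $\binom{N}{n}(\alpha/N)^n(1-\alpha/N)^{N-n} \le 4\, e^{-\alpha}\frac{\alpha^n}{n!}$. -/
open Finset

theorem binomial_dominated_by_poisson (α : ℝ) (hα : 0 < α) :
    ∃ N₀ : ℕ, ∀ N : ℕ, N₀ ≤ N → ∀ n : ℕ, α < n → n ≤ N →
      (N.choose n : ℝ) * (α / N) ^ n * (1 - α / N) ^ (N - n) ≤
        4 * Real.exp (-α) * α ^ n / n.factorial := by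
  refine ⟨⌈(α + 1/2)^2⌉₊, fun N hN n hαn hnN => ?_⟩
  have hn0 : 0 < n := by
    rcases Nat.eq_zero_or_pos n with h | h
    · subst h; simp at hαn; linarith
    · exact h
  have hN0 : 0 < N := lt_of_lt_of_le hn0 hnN
  have hNR : (0:ℝ) < N := by exact_mod_cast hN0
  have hαN : α < N := lt_of_lt_of_le hαn (by exact_mod_cast hnN)
  have hbase : 0 ≤ 1 - α / N := by
    rw [sub_nonneg, div_le_one hNR]; linarith
  have hNge : ((α + 1/2)^2 : ℝ) ≤ N := le_trans (Nat.le_ceil _) (by exact_mod_cast hN)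
  -- rewrite the choose * (α/N)^n part
  have hchoose : (N.choose n : ℝ) * (α / N) ^ n
      = α ^ n / n.factorial * ∏ i ∈ range n, (1 - (i:ℝ)/N) := by
    have h1 : (n.factorial * N.choose n : ℕ) = ∏ i ∈ range n, (N - i) := by
      rw [← Nat.descFactorial_eq_factorial_mul_choose, Nat.descFactorial_eq_prod_range]
    have h2 : ((n.factorial : ℝ)) * N.choose n = ∏ i ∈ range n, ((N:ℝ) - i) := by
      have := congrArg (Nat.cast : ℕ → ℝ) h1
      push_cast at this
      rw [this]
      exact Finset.prod_congr rfl fun i hi => by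
        have hiN : i ≤ N := le_trans (le_of_lt (mem_range.mp hi)) hnN
        rw [Nat.cast_sub hiN]
    have h3 : ∏ i ∈ range n, (1 - (i:ℝ)/N) = (∏ i ∈ range n, ((N:ℝ) - i)) / (N:ℝ)^n := by
      rw [show (N:ℝ)^n = ∏ _i ∈ range n, (N:ℝ) by rw [Finset.prod_const, card_range],
        ← Finset.prod_div_distrib]
      exact Finset.prod_congr rfl fun i hi => by field_simp
    have hfac : (0:ℝ) < n.factorial := by exact_mod_cast n.factorial_pos
    have hc2 : (N.choose n : ℝ) = (∏ i ∈ range n, ((N:ℝ) - i)) / n.factorial := by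
      rw [eq_div_iff hfac.ne']
      linarith [h2]
    rw [hc2, h3, div_pow]
    ring
  -- key bound on the product part
  have key : (∏ i ∈ range n, (1 - (i:ℝ)/N)) * (1 - α/N) ^ (N - n) ≤ 4 * Real.exp (-α) := by
    have h1 : ∏ i ∈ range n, (1 - (i:ℝ)/N) ≤ ∏ i ∈ range n, Real.exp (-((i:ℝ)/N)) := by
      apply Finset.prod_le_prod
      · intro i hi
        have hiN : (i:ℝ) ≤ N := by
          exact_mod_cast le_trans (le_of_lt (mem_range.mp hi)) hnN
        rw [sub_nonneg, div_le_one hNR]; exact hiN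
      · intro i hi
        linarith [Real.add_one_le_exp (-((i:ℝ)/N))]
    rw [← Real.exp_sum] at h1
    have h2 : (1 - α/N) ^ (N - n) ≤ Real.exp (-(α/N)) ^ (N - n) :=
      pow_le_pow_left₀ hbase (by linarith [Real.add_one_le_exp (-(α/N))]) _
    rw [← Real.exp_nat_mul] at h2
    have hprodpos : 0 ≤ ∏ i ∈ range n, (1 - (i:ℝ)/N) := by
      apply Finset.prod_nonneg
      intro i hi
      have hiN : (i:ℝ) ≤ N := by
        exact_mod_cast le_trans (le_of_lt (mem_range.mp hi)) hnN
      rw [sub_nonneg, div_le_one hNR]; exact hiN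
    have hpowpos : 0 ≤ (1 - α/N) ^ (N - n) := pow_nonneg hbase _
    have hmul : (∏ i ∈ range n, (1 - (i:ℝ)/N)) * (1 - α/N) ^ (N - n)
        ≤ Real.exp (∑ i ∈ range n, -((i:ℝ)/N)) * Real.exp (((N - n : ℕ):ℝ) * (-(α/N))) :=
      mul_le_mul h1 h2 hpowpos (Real.exp_nonneg _)
    rw [← Real.exp_add] at hmul
    refine le_trans hmul ?_
    -- compute the exponent bound
    have hid : ∑ i ∈ range n, (i:ℝ) = (n:ℝ) * ((n:ℝ) - 1) / 2 := by
      have h := congrArg (Nat.cast : ℕ → ℝ) (Finset.sum_range_id_mul_two n)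
      push_cast [Nat.cast_sub hn0] at h
      linarith
    have hsum : ∑ i ∈ range n, -((i:ℝ)/N) = -((n:ℝ) * ((n:ℝ) - 1) / 2) / N := by
      rw [Finset.sum_neg_distrib, ← Finset.sum_div, hid, neg_div]
    have hcastNn : ((N - n : ℕ):ℝ) = (N:ℝ) - n := by
      rw [Nat.cast_sub hnN]
    have hexp : ∑ i ∈ range n, -((i:ℝ)/N) + ((N - n : ℕ):ℝ) * (-(α/N)) ≤ -α + 1/2 := by
      rw [hsum, hcastNn]
      have hq : α * n - (n:ℝ) * ((n:ℝ) - 1) / 2 ≤ (α + 1/2)^2 / 2 := by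
        nlinarith [sq_nonneg ((n:ℝ) - (α + 1/2))]
      have hE : -((n:ℝ) * ((n:ℝ) - 1) / 2) / N + ((N:ℝ) - n) * (-(α/N))
          = -α + (α * n - (n:ℝ) * ((n:ℝ) - 1) / 2) / N := by
        field_simp; ring
      rw [hE]
      have hfrac : (α * n - (n:ℝ) * ((n:ℝ) - 1) / 2) / N ≤ 1/2 := by
        rw [div_le_iff₀ hNR]
        linarith
      linarith
    refine le_trans (Real.exp_le_exp.mpr hexp) ?_
    rw [Real.exp_add]
    have h4 : Real.exp (1/2 : ℝ) ≤ 4 := by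
      have := Real.exp_one_lt_d9
      have h5 : Real.exp (1/2 : ℝ) ≤ Real.exp 1 := Real.exp_le_exp.mpr (by norm_num)
      linarith
    calc Real.exp (-α) * Real.exp (1/2) ≤ Real.exp (-α) * 4 :=
          mul_le_mul_of_nonneg_left h4 (Real.exp_nonneg _)
      _ = 4 * Real.exp (-α) := by ring
  -- combine
  have hfacpos : (0:ℝ) < n.factorial := by exact_mod_cast n.factorial_pos
  rw [hchoose, mul_assoc]
  have hnonneg : 0 ≤ α ^ n / (n.factorial : ℝ) := by positivity
  calc α ^ n / (n.factorial:ℝ) * ((∏ i ∈ range n, (1 - (i:ℝ)/N)) * (1 - α/N) ^ (N - n))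
      ≤ α ^ n / (n.factorial:ℝ) * (4 * Real.exp (-α)) := mul_le_mul_of_nonneg_left key hnonneg
    _ = 4 * Real.exp (-α) * α ^ n / n.factorial := by ring
end

section
/- Let $\mu, \rho > 0$, $\eta_0 > 0$, let $\gamma(v) = e^{-\pi v^2}$, and let $g_0$ be a probability density on $\mathbb{R}$. Define $\eta(t) = e^{-\rho t}\eta_0 + (1-e^{-\rho t})\mu/\rho$ and $g(v,t) = \frac{1}{\eta(t)}\big(e^{-\rho t}\eta_0 g_0(v) + (1-e^{-\rho t})\tfrac{\mu}{\rho}\gamma(v)\big)$. Then $f_N(\mathbf{v}_N,t) = e^{-\eta(t)}\frac{\eta(t)^N}{N!}\prod_{i=1}^N g(v_i,t)$ satisfies, for every $N$, the master equation $\partial_t f_N = \rho\big((N+1)\int f_{N+1}(\mathbf{v}_N,w,t)\,dw - N f_N\big) + \mu\big(\frac{1}{N}\sum_{i=1}^N \gamma(v_i) f_{N-1}(\mathbf{v}_N^i,t) - f_N\big)$, where $\mathbf{v}_N^i$ omits $v_i$. -/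
open MeasureTheory

theorem thermostat_preserves_product_states (μ ρ : ℝ) (hμ : 0 < μ) (hρ : 0 < ρ)
    (η₀ : ℝ) (hη₀ : 0 < η₀)
    (γ : ℝ → ℝ) (hγ : ∀ v, γ v = Real.exp (-Real.pi * v ^ 2))
    (g₀ : ℝ → ℝ) (hg₀pos : ∀ v, 0 ≤ g₀ v) (hg₀int : Integrable g₀)
    (hg₀norm : (∫ v, g₀ v) = 1)
    (η : ℝ → ℝ)
    (hη : ∀ t, η t = Real.exp (-ρ * t) * η₀ + (1 - Real.exp (-ρ * t)) * (μ / ρ))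
    (g : ℝ → ℝ → ℝ)
    (hg : ∀ v t, g v t =
      (Real.exp (-ρ * t) * η₀ * g₀ v + (1 - Real.exp (-ρ * t)) * (μ / ρ) * γ v) / η t)
    (f : (N : ℕ) → (Fin N → ℝ) → ℝ → ℝ)
    (hf : ∀ (N : ℕ) (v : Fin N → ℝ) (t : ℝ),
      f N v t = Real.exp (-η t) * η t ^ N / N.factorial * ∏ i, g (v i) t) :
    ∀ (N : ℕ) (v : Fin (N + 1) → ℝ) (t : ℝ), 0 ≤ t →
      HasDerivAt (fun s => f (N + 1) v s)
        (ρ * (((N : ℝ) + 2) * (∫ w : ℝ, f (N + 2) (Fin.snoc v w) t) -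
            ((N : ℝ) + 1) * f (N + 1) v t) +
          μ * ((1 / ((N : ℝ) + 1)) *
              (∑ i, γ (v i) * f N (fun j => v (i.succAbove j)) t) -
            f (N + 1) v t)) t := by
  intro N v t ht
  have hμρ : 0 < μ / ρ := div_pos hμ hρ
  have hEt0 : (0:ℝ) < Real.exp (-ρ * t) := Real.exp_pos _
  have hEt1 : Real.exp (-ρ * t) ≤ 1 := by
    rw [Real.exp_le_one_iff]; nlinarith
  have hηt : 0 < η t := by
    rw [hη]; nlinarith
  have hηc : Continuous η := by
    have : η = fun s => Real.exp (-ρ * s) * η₀ + (1 - Real.exp (-ρ * s)) * (μ / ρ) :=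
      funext hη
    rw [this]; fun_prop
  have hev : ∀ᶠ s in nhds t, 0 < η s :=
    (hηc.continuousAt (x := t)).eventually (eventually_gt_nhds hηt)
  have key : ∀ X B K PP : ℝ, B ≠ 0 → X * B / K * (PP / B) = X * PP / K := by
    intro X B K PP hB
    field_simp
  -- numerator functions
  set H : Fin (N + 1) → ℝ → ℝ := fun i s =>
    Real.exp (-ρ * s) * η₀ * g₀ (v i) + (1 - Real.exp (-ρ * s)) * (μ / ρ) * γ (v i) with hHdef
  set P : ℝ := ∏ i, H i t with hPdef
  set Q : Fin (N + 1) → ℝ := fun i => ∏ j ∈ Finset.univ.erase i, H j t with hQdef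
  -- eventual equality
  have hFeq : (fun s => f (N + 1) v s) =ᶠ[nhds t]
      fun s => (Real.exp (-η s) * ∏ i, H i s) / ((N + 1).factorial : ℝ) := by
    filter_upwards [hev] with s hs
    rw [hf]
    have hgij : ∀ i : Fin (N + 1), g (v i) s = H i s / η s := fun i => hg (v i) s
    rw [Finset.prod_congr rfl (fun i _ => hgij i), Finset.prod_div_distrib,
      Finset.prod_const, Finset.card_univ, Fintype.card_fin]
    exact key _ _ _ _ (pow_ne_zero _ (ne_of_gt hs))
  -- derivatives
  have hE' : HasDerivAt (fun s => Real.exp (-ρ * s)) (Real.exp (-ρ * t) * (-ρ)) t := by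
    have h1 : HasDerivAt (fun s : ℝ => -ρ * s) (-ρ) t := by
      simpa using (hasDerivAt_id t).const_mul (-ρ)
    exact h1.exp
  have hη' : HasDerivAt η (μ - ρ * η t) t := by
    have heq : η = fun s => Real.exp (-ρ * s) * η₀ + (1 - Real.exp (-ρ * s)) * (μ / ρ) :=
      funext hη
    rw [heq]
    have := (hE'.mul_const η₀).add
      (((hasDerivAt_const t (1:ℝ)).sub hE').mul_const (μ / ρ))
    refine this.congr_deriv ?_
    field_simp
    ring
  have hexp' : HasDerivAt (fun s => Real.exp (-η s)) ((ρ * η t - μ) * Real.exp (-η t)) t := by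
    have := hη'.neg.exp
    refine this.congr_deriv ?_
    show Real.exp (-η t) * -(μ - ρ * η t) = _
    ring
  have hH' : ∀ i : Fin (N + 1),
      HasDerivAt (H i) (-(ρ * H i t) + μ * γ (v i)) t := by
    intro i
    have hb := ((hE'.mul_const η₀).mul_const (g₀ (v i))).add
      (((hasDerivAt_const t (1:ℝ)).sub hE').mul_const (μ / ρ) |>.mul_const (γ (v i)))
    refine hb.congr_deriv ?_
    simp only [H]
    field_simp
    ring
  have hP' : HasDerivAt (fun s => ∏ i, H i s)
      (∑ i, Q i • (-(ρ * H i t) + μ * γ (v i))) t := by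
    have := HasDerivAt.fun_finsetProd (u := Finset.univ) (f := H)
      (f' := fun i => -(ρ * H i t) + μ * γ (v i)) (fun i _ => hH' i)
    exact this
  have hD : HasDerivAt (fun s => f (N + 1) v s)
      (((ρ * η t - μ) * Real.exp (-η t) * P +
        Real.exp (-η t) * ∑ i, Q i • (-(ρ * H i t) + μ * γ (v i))) /
        ((N + 1).factorial : ℝ)) t :=
    HasDerivAt.congr_of_eventuallyEq ((hexp'.mul hP').div_const _) hFeq
  -- integral facts
  have hγfun : γ = fun w => Real.exp (-Real.pi * w ^ 2) := funext hγ
  have hγint : Integrable γ := by rw [hγfun]; exact integrable_exp_neg_mul_sq Real.pi_pos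
  have hγnorm : (∫ w, γ w) = 1 := by
    rw [hγfun, integral_gaussian, div_self (ne_of_gt Real.pi_pos), Real.sqrt_one]
  have hgfun : (fun w => g w t) = fun w =>
      (Real.exp (-ρ * t) * η₀ / η t) * g₀ w +
      ((1 - Real.exp (-ρ * t)) * (μ / ρ) / η t) * γ w := by
    funext w; rw [hg]; ring
  have hgint : Integrable (fun w => g w t) := by
    rw [hgfun]; exact (hg₀int.const_mul _).add (hγint.const_mul _)
  have hgnorm : (∫ w, g w t) = 1 := by
    rw [hgfun, integral_add (hg₀int.const_mul _) (hγint.const_mul _),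
      integral_const_mul, integral_const_mul, hg₀norm, hγnorm]
    have h1 : Real.exp (-ρ * t) * η₀ / η t * 1 +
        (1 - Real.exp (-ρ * t)) * (μ / ρ) / η t * 1 =
        (Real.exp (-ρ * t) * η₀ + (1 - Real.exp (-ρ * t)) * (μ / ρ)) / η t := by ring
    rw [h1, ← hη, div_self (ne_of_gt hηt)]
  have hI : (∫ w : ℝ, f (N + 2) (Fin.snoc v w) t) =
      η t / ((N : ℝ) + 2) * f (N + 1) v t := by
    have hpt : ∀ w : ℝ, f (N + 2) (Fin.snoc v w) t =
        (Real.exp (-η t) * η t ^ (N + 2) / ((N + 2).factorial : ℝ) * ∏ i, g (v i) t) *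
          g w t := by
      intro w
      rw [hf, Fin.prod_univ_castSucc]
      simp only [Fin.snoc_castSucc, Fin.snoc_last]
      ring
    simp_rw [hpt]
    rw [integral_const_mul, hgnorm, mul_one, hf]
    have hfac2 : (((N + 2).factorial : ℕ) : ℝ) = ((N:ℝ) + 2) * ((N + 1).factorial : ℝ) := by
      rw [Nat.factorial_succ]; push_cast; ring
    rw [hfac2]
    have h2 : ((N:ℝ) + 2) ≠ 0 := by positivity
    have h3 : (((N + 1).factorial : ℕ) : ℝ) ≠ 0 := by
      exact_mod_cast Nat.factorial_ne_zero (N + 1)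
    field_simp
    ring
  -- product identities
  have hfP : f (N + 1) v t = Real.exp (-η t) * P / ((N + 1).factorial : ℝ) :=
    hFeq.self_of_nhds
  have herase : ∀ i : Fin (N + 1), Q i = ∏ j : Fin N, H (i.succAbove j) t := by
    intro i
    show ∏ j ∈ Finset.univ.erase i, H j t = _
    rw [Fin.univ_succAbove N i, Finset.erase_cons, Finset.prod_map]
    simp
  have hS : ∀ i : Fin (N + 1), f N (fun j => v (i.succAbove j)) t =
      Real.exp (-η t) * Q i / (N.factorial : ℝ) := by
    intro i
    rw [hf, herase i]
    have hgij : ∀ j : Fin N, g (v (i.succAbove j)) t = H (i.succAbove j) t / η t :=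
      fun j => hg _ t
    rw [Finset.prod_congr rfl (fun j _ => hgij j), Finset.prod_div_distrib,
      Finset.prod_const, Finset.card_univ, Fintype.card_fin]
    exact key _ _ _ _ (pow_ne_zero _ (ne_of_gt hηt))
  have hQH : ∑ i, Q i * H i t = ((N:ℝ) + 1) * P := by
    have h1 : ∀ i ∈ Finset.univ, Q i * H i t = P := fun i _ =>
      Finset.prod_erase_mul Finset.univ _ (Finset.mem_univ i)
    rw [Finset.sum_congr rfl h1, Finset.sum_const, Finset.card_univ, Fintype.card_fin,
      nsmul_eq_mul]
    push_cast; ring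
  have hSsum : ∑ i, Q i • (-(ρ * H i t) + μ * γ (v i)) =
      -(ρ * (((N:ℝ) + 1) * P)) + μ * ∑ i, γ (v i) * Q i := by
    have h1 : ∀ i ∈ Finset.univ, Q i • (-(ρ * H i t) + μ * γ (v i)) =
        -(ρ * (Q i * H i t)) + μ * (γ (v i) * Q i) := by
      intro i _; rw [smul_eq_mul]; ring
    rw [Finset.sum_congr rfl h1, Finset.sum_add_distrib, Finset.sum_neg_distrib,
      ← Finset.mul_sum, hQH, ← Finset.mul_sum]
  -- assemble
  convert hD using 1
  rw [hI, hSsum, hfP]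
  have hrwS : ∀ i ∈ Finset.univ, γ (v i) * f N (fun j => v (i.succAbove j)) t =
      γ (v i) * (Real.exp (-η t) * Q i / (N.factorial : ℝ)) := by
    intro i _; rw [hS i]
  rw [Finset.sum_congr rfl hrwS]
  have hfac : (((N + 1).factorial : ℕ) : ℝ) = ((N:ℝ) + 1) * (N.factorial : ℝ) := by
    rw [Nat.factorial_succ]; push_cast; ring
  rw [hfac]
  have h2 : ((N:ℝ) + 1) ≠ 0 := by positivity
  have h4 : ((N:ℝ) + 2) ≠ 0 := by positivity
  have h3 : ((N.factorial : ℕ) : ℝ) ≠ 0 := by exact_mod_cast Nat.factorial_ne_zero N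
  have hsum2 : ∑ x : Fin (N + 1), γ (v x) * (Real.exp (-η t) * Q x / (N.factorial : ℝ)) =
      (Real.exp (-η t) / (N.factorial : ℝ)) * ∑ i, γ (v i) * Q i := by
    rw [Finset.mul_sum]
    exact Finset.sum_congr rfl fun i _ => by ring
  rw [hsum2]
  field_simp
  ring
end
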